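/- For every index j ∈ {0, 1, …, n}, the set of points of S whose j-th homogeneous coordinate vanishes (i.e., the fixed point set of the automorphism φ_j of S) is finite of cardinality exactly k^{n−1}. -/

import Mathlib

open Polynomial Projectivization Fin.NatCast

/-- A nonzero vector `x ∈ ℂ^{n+1}` satisfies the defining equations of the generalized
Fermat curve of type `(k,n)`: `lam i * x₀^k + x₁^k + x_{i+2}^k = 0` for `0 ≤ i ≤ n - 2`
(with `lam 0 = 1`). -/
def fermatEqns (n k : ℕ) (lam : ℕ → ℂ) (x : Fin (n + 1) → ℂ) : Prop :=
  ∀ i : ℕ, i ≤ n - 2 → lam i * x 0 ^ k + x 1 ^ k + x ((i + 2 : ℕ) : Fin (n + 1)) ^ k = 0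


lemma rootsSetEq (k : ℕ) (hk : 1 ≤ k) (a : ℂ) :
    {z : ℂ | z ^ k = a} = (X ^ k - C a).rootSet ℂ := by
  ext z
  rw [mem_rootSet]
  simp only [Set.mem_setOf_eq, map_sub, map_pow, aeval_X, aeval_C, sub_eq_zero]
  constructor
  · intro h; exact ⟨X_pow_sub_C_ne_zero (by omega) a, h⟩
  · intro h; exact h.2

lemma rootsFin (k : ℕ) (hk : 1 ≤ k) (a : ℂ) : {z : ℂ | z ^ k = a}.Finite := by
  rw [rootsSetEq k hk a]; exact (X ^ k - C a).rootSet_finite ℂ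

lemma rootsCard (k : ℕ) (hk : 1 ≤ k) (a : ℂ) (ha : a ≠ 0) :
    {z : ℂ | z ^ k = a}.ncard = k := by
  rw [rootsSetEq k hk a, ← Nat.card_coe_set_eq, Nat.card_eq_fintype_card,
    card_rootSet_eq_natDegree (separable_X_pow_sub_C a (by exact_mod_cast Nat.cast_ne_zero.2 (by omega)) ha)
      (IsAlgClosed.splits _), natDegree_X_pow_sub_C]


lemma cast_of_ge2 {n : ℕ} (m : Fin (n + 1)) (hm : 2 ≤ m.val) :
    m.val - 2 ≤ n - 2 ∧ ((m.val - 2 + 2 : ℕ) : Fin (n + 1)) = m := by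
  have h := m.isLt
  refine ⟨by omega, ?_⟩
  have h2 : m.val - 2 + 2 = m.val := by omega
  rw [h2, Fin.cast_val_eq_self]

lemma cast_val {n : ℕ} (hn : 2 ≤ n) {i : ℕ} (hi : i ≤ n - 2) :
    ((i + 2 : ℕ) : Fin (n + 1)).val = i + 2 := by
  rw [Fin.val_natCast, Nat.mod_eq_of_lt (by omega)]

lemma fin_one_val {n : ℕ} (hn : 1 ≤ n) : (1 : Fin (n + 1)).val = 1 := by
  show 1 % (n + 1) = 1
  exact Nat.mod_eq_of_lt (by omega)

lemma two_le_val {n : ℕ} (hn : 1 ≤ n) {m : Fin (n + 1)} (h0 : m ≠ 0) (h1 : m ≠ 1) :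
    2 ≤ m.val := by
  have e0 : m.val ≠ 0 := fun hh => h0 (Fin.ext (by simp [hh]))
  have e1 : m.val ≠ 1 := fun hh => h1 (Fin.ext (by rw [hh, fin_one_val hn]))
  omega

lemma fermat_smul {n k : ℕ} {lam : ℕ → ℂ} {x : Fin (n + 1) → ℂ}
    (h : fermatEqns n k lam x) (t : ℂ) : fermatEqns n k lam (t • x) := by
  intro i hi
  have := h i hi
  simp only [Pi.smul_apply, smul_eq_mul, mul_pow]
  linear_combination t ^ k * this

lemma fermat_zero {n k : ℕ} (hk : 1 ≤ k) {lam : ℕ → ℂ} {x : Fin (n + 1) → ℂ}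
    (h : fermatEqns n k lam x) (h0 : x 0 = 0) (h1 : x 1 = 0) : x = 0 := by
  funext m
  by_cases hm : 2 ≤ m.val
  · obtain ⟨hi, hcast⟩ := cast_of_ge2 m hm
    have := h (m.val - 2) hi
    rw [hcast, h0, h1, zero_pow (by omega), mul_zero, zero_add, zero_add] at this
    exact pow_eq_zero_iff (by omega) |>.mp this
  · interval_cases hv : m.val
    · have : m = 0 := Fin.ext (by simpa using hv)
      simpa [this] using h0
    · have hm1 : m = 1 := by
        have hl := m.isLt
        rw [hv] at hl
        apply Fin.ext
        rw [hv]
        show 1 = 1 % (n + 1)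
        rw [Nat.mod_eq_of_lt hl]
      simpa [hm1] using h1

lemma core (k n : ℕ) (hk : 2 ≤ k) (hn : 2 ≤ n)
    (lam : ℕ → ℂ) (hlam0 : lam 0 = 1)
    (hlam_ne0 : ∀ i, 1 ≤ i → i ≤ n - 2 → lam i ≠ 0)
    (hlam_inj : ∀ i j, i ≤ n - 2 → j ≤ n - 2 → lam i = lam j → i = j)
    (j : Fin (n + 1)) :
    ∃ (c : Fin (n + 1)) (S : Fin (n + 1) → Set ℂ),
      c ≠ j ∧ S j = {0} ∧ S c = {1} ∧
      (∀ m, m ≠ j → m ≠ c → ∃ a : ℂ, a ≠ 0 ∧ S m = {z : ℂ | z ^ k = a}) ∧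
      (∀ x : Fin (n + 1) → ℂ,
        (fermatEqns n k lam x ∧ x j = 0 ∧ x c = 1) ↔ ∀ m, x m ∈ S m) ∧
      (∀ x : Fin (n + 1) → ℂ, fermatEqns n k lam x → x j = 0 → x c = 0 → x = 0) := by
  have hn' : ¬ (n + 1 = 1) := by omega
  have hone : (1 : Fin (n + 1)) ≠ 0 := by
    intro h
    have := congrArg Fin.val h
    rw [fin_one_val (by omega)] at this
    simp at this
  have lam_ne0 : ∀ i, i ≤ n - 2 → lam i ≠ 0 := by
    intro i hi
    rcases Nat.eq_zero_or_pos i with h | h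
    · rw [h, hlam0]; exact one_ne_zero
    · exact hlam_ne0 i h hi
  by_cases hj0 : j = 0
  · subst hj0
    refine ⟨1, fun m => if m = 0 then {0} else if m = 1 then {1}
        else {z : ℂ | z ^ k = -1}, hone, by simp, by simp [hn', show n ≠ 0 by omega], ?_, ?_, ?_⟩
    · intro m hm0 hm1
      refine ⟨-1, by norm_num, ?_⟩
      simp [hm0, hm1]
    · intro x
      constructor
      · rintro ⟨hF, h0, h1⟩ m
        by_cases hm0 : m = 0
        · simp [hm0, h0]
        by_cases hm1 : m = 1
        · subst hm1
          simp [hn', h1, show n ≠ 0 by omega]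
        have hm2 : 2 ≤ m.val := two_le_val (by omega) hm0 hm1
        obtain ⟨hi, hcast⟩ := cast_of_ge2 m hm2
        have heq := hF _ hi
        rw [hcast, h0, h1, zero_pow (by omega), one_pow, mul_zero, zero_add] at heq
        simp only [if_neg hm0, if_neg hm1, Set.mem_setOf_eq]
        linear_combination heq
      · intro h
        have h0 : x 0 = 0 := by simpa using h 0
        have h1 : x 1 = 1 := by simpa [hone] using h 1
        refine ⟨?_, h0, h1⟩
        intro i hi
        set m : Fin (n + 1) := ((i + 2 : ℕ) : Fin (n + 1)) with hm
        have hval : m.val = i + 2 := cast_val hn hi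
        have hm0 : m ≠ 0 := by intro hh; rw [hh] at hval; simp at hval
        have hm1 : m ≠ 1 := by
          intro hh; rw [hh, fin_one_val (by omega)] at hval; omega
        have := h m
        simp only [if_neg hm0, if_neg hm1] at this
        rw [h0, h1, zero_pow (by omega), one_pow, mul_zero, zero_add]
        rw [Set.mem_setOf_eq] at this
        rw [this]; ring
    · intro x hF h0 h1
      exact fermat_zero (by omega) hF h0 h1
  by_cases hj1 : j = 1
  · subst hj1
    refine ⟨0, fun m => if m = 1 then {0} else if m = 0 then {1}
        else {z : ℂ | z ^ k = -lam (m.val - 2)}, Ne.symm hone, by simp [hn', show n ≠ 0 by omega], by simp [hn', show n ≠ 0 by omega], ?_, ?_, ?_⟩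
    · intro m hm1 hm0
      have hm2 : 2 ≤ m.val := two_le_val (by omega) hm0 hm1
      obtain ⟨hi, _⟩ := cast_of_ge2 m hm2
      refine ⟨-lam (m.val - 2), neg_ne_zero.2 (lam_ne0 _ hi), ?_⟩
      simp [hm0, hm1]
    · intro x
      constructor
      · rintro ⟨hF, h1, h0⟩ m
        by_cases hm1 : m = 1
        · subst hm1
          simp [hn', h1]
        by_cases hm0 : m = 0
        · subst hm0
          simp [hn', h0, show n ≠ 0 by omega]
        have hm2 : 2 ≤ m.val := two_le_val (by omega) hm0 hm1
        obtain ⟨hi, hcast⟩ := cast_of_ge2 m hm2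
        have heq := hF _ hi
        rw [hcast, h0, h1, zero_pow (by omega), one_pow, mul_one] at heq
        simp only [if_neg hm0, if_neg hm1, Set.mem_setOf_eq]
        linear_combination heq
      · intro h
        have h0 : x 0 = 1 := by simpa [Ne.symm hone] using h 0
        have h1 : x 1 = 0 := by simpa [hn'] using h 1
        refine ⟨?_, h1, h0⟩
        intro i hi
        set m : Fin (n + 1) := ((i + 2 : ℕ) : Fin (n + 1)) with hm
        have hval : m.val = i + 2 := cast_val hn hi
        have hm0 : m ≠ 0 := by intro hh; rw [hh] at hval; simp at hval
        have hm1 : m ≠ 1 := by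
          intro hh; rw [hh, fin_one_val (by omega)] at hval; omega
        have hmem := h m
        simp only [if_neg hm0, if_neg hm1, Set.mem_setOf_eq] at hmem
        have hiv : m.val - 2 = i := by omega
        rw [hiv] at hmem
        rw [h0, h1, zero_pow (by omega), one_pow, mul_one, hmem]
        ring
    · intro x hF h1 h0
      exact fermat_zero (by omega) hF h0 h1
  -- case 2 ≤ j.val
  · have hjv : 2 ≤ j.val := two_le_val (by omega) hj0 hj1
    obtain ⟨hi0, hjcast⟩ := cast_of_ge2 j hjv
    set i0 : ℕ := j.val - 2 with hi0def
    have hlam_i0 : lam i0 ≠ 0 := lam_ne0 _ hi0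
    have h1j : (1 : Fin (n + 1)) ≠ j := by
      intro hh
      rw [← hh, fin_one_val (by omega)] at hjv
      omega
    have h0j : (0 : Fin (n + 1)) ≠ j := by
      intro hh
      rw [← hh] at hjv
      simp at hjv
    refine ⟨1, fun m => if m = j then {0} else if m = 1 then {1}
        else if m = 0 then {z : ℂ | z ^ k = -(lam i0)⁻¹}
        else {z : ℂ | z ^ k = lam (m.val - 2) * (lam i0)⁻¹ - 1},
      h1j, by simp, by simp only [if_neg h1j, eq_self_iff_true, if_true], ?_, ?_, ?_⟩
    · intro m hmj hm1
      by_cases hm0 : m = 0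
      · refine ⟨-(lam i0)⁻¹, neg_ne_zero.2 (inv_ne_zero hlam_i0), ?_⟩
        simp only [if_neg hmj, if_neg hm1, if_pos hm0]
      · have hm2 : 2 ≤ m.val := two_le_val (by omega) hm0 hm1
        obtain ⟨hi, _⟩ := cast_of_ge2 m hm2
        refine ⟨lam (m.val - 2) * (lam i0)⁻¹ - 1, ?_, ?_⟩
        · intro hh
          rw [sub_eq_zero, mul_inv_eq_one₀ hlam_i0] at hh
          have := hlam_inj _ _ hi hi0 hh
          have hne : m.val ≠ j.val := fun h => hmj (Fin.ext h)
          omega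
        · simp only [if_neg hmj, if_neg hm1, if_neg hm0]
    · intro x
      constructor
      · rintro ⟨hF, hxj, h1⟩ m
        have heq0 := hF i0 hi0
        rw [hjcast, hxj, h1, zero_pow (by omega : k ≠ 0), one_pow, add_zero] at heq0
        have hx0 : x 0 ^ k = -(lam i0)⁻¹ := by
          field_simp
          linear_combination heq0
        by_cases hmj : m = j
        · subst hmj
          simp [hxj]
        by_cases hm1 : m = 1
        · subst hm1
          simp only [if_neg hmj, eq_self_iff_true, if_true, h1, Set.mem_singleton_iff]
        by_cases hm0 : m = 0
        · subst hm0
          simp only [if_neg hmj, if_neg hm1, eq_self_iff_true, if_true, Set.mem_setOf_eq]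
          exact hx0
        have hm2 : 2 ≤ m.val := two_le_val (by omega) hm0 hm1
        obtain ⟨hi, hcast⟩ := cast_of_ge2 m hm2
        have heq := hF _ hi
        rw [hcast, h1, one_pow] at heq
        simp only [if_neg hmj, if_neg hm1, if_neg hm0, Set.mem_setOf_eq]
        linear_combination heq - lam (m.val - 2) * hx0
      · intro h
        have hxj : x j = 0 := by simpa using h j
        have h1 : x 1 = 1 := by
          have := h 1
          simp only [if_neg h1j, eq_self_iff_true, if_true, Set.mem_singleton_iff] at this
          exact this
        have hx0 : x 0 ^ k = -(lam i0)⁻¹ := by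
          have := h 0
          simp only [if_neg h0j, if_neg (show (0 : Fin (n+1)) ≠ 1 from Ne.symm hone),
            eq_self_iff_true, if_true, Set.mem_setOf_eq] at this
          exact this
        refine ⟨?_, hxj, h1⟩
        intro i hi
        set m : Fin (n + 1) := ((i + 2 : ℕ) : Fin (n + 1)) with hm
        have hval : m.val = i + 2 := cast_val hn hi
        by_cases hmj : m = j
        · have hii0 : i = i0 := by
            have := congrArg Fin.val hmj
            omega
          rw [hmj, hxj, h1, hii0, hx0, zero_pow (by omega : k ≠ 0), one_pow]
          field_simp
          ring
        · have hm0 : m ≠ 0 := by intro hh; rw [hh] at hval; simp at hval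
          have hm1 : m ≠ 1 := by
            intro hh; rw [hh, fin_one_val (by omega)] at hval; omega
          have hmem := h m
          simp only [if_neg hmj, if_neg hm1, if_neg hm0, Set.mem_setOf_eq] at hmem
          have hiv : m.val - 2 = i := by omega
          rw [hiv] at hmem
          rw [h1, one_pow]
          linear_combination hmem + lam i * hx0
    · intro x hF hxj h1
      have heq0 := hF i0 hi0
      rw [hjcast, hxj, h1, zero_pow (by omega : k ≠ 0), add_zero, add_zero] at heq0
      have hx0 : x 0 = 0 := by
        rcases mul_eq_zero.mp heq0 with h | h
        · exact absurd h hlam_i0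
        · exact pow_eq_zero_iff (by omega : k ≠ 0) |>.mp h
      exact fermat_zero (by omega) hF hx0 h1



theorem fermat_main_aux (k n : ℕ) (hk : 2 ≤ k) (hn : 2 ≤ n)
    (P : (Fin (n + 1) → ℂ) → Prop)
    (hP : ∀ (x : Fin (n + 1) → ℂ) (t : ℂ), P x → P (t • x))
    (j c : Fin (n + 1)) (S : Fin (n + 1) → Set ℂ)
    (hcj : c ≠ j) (hSj : S j = {0}) (hSc : S c = {1})
    (hSa : ∀ m, m ≠ j → m ≠ c → ∃ a : ℂ, a ≠ 0 ∧ S m = {z : ℂ | z ^ k = a})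
    (hiff : ∀ x : Fin (n + 1) → ℂ, (P x ∧ x j = 0 ∧ x c = 1) ↔ ∀ m, x m ∈ S m)
    (hzero : ∀ x : Fin (n + 1) → ℂ, P x → x j = 0 → x c = 0 → x = 0)
    (rootsFin : ∀ (a : ℂ), {z : ℂ | z ^ k = a}.Finite)
    (rootsCard : ∀ (a : ℂ), a ≠ 0 → {z : ℂ | z ^ k = a}.ncard = k) :
    {p : Projectivization ℂ (Fin (n + 1) → ℂ) | P p.rep ∧ p.rep j = 0}.Finite ∧
    {p : Projectivization ℂ (Fin (n + 1) → ℂ) | P p.rep ∧ p.rep j = 0}.ncard = k ^ (n - 1) := by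
  classical
  set T : Set (Fin (n + 1) → ℂ) := Set.univ.pi S with hT
  -- finiteness of each S m
  have hSfin : ∀ m, (S m).Finite := by
    intro m
    by_cases hmj : m = j
    · rw [hmj, hSj]; exact Set.finite_singleton 0
    by_cases hmc : m = c
    · rw [hmc, hSc]; exact Set.finite_singleton 1
    obtain ⟨a, -, hSm⟩ := hSa m hmj hmc
    rw [hSm]; exact rootsFin a
  have hTfin : T.Finite := Set.Finite.pi hSfin
  -- cardinality of T
  have hScard : ∀ m, m ≠ j → m ≠ c → (S m).ncard = k := by
    intro m hmj hmc
    obtain ⟨a, ha, hSm⟩ := hSa m hmj hmc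
    rw [hSm]; exact rootsCard a ha
  have hTcard : T.ncard = k ^ (n - 1) := by
    rw [← Nat.card_coe_set_eq, hT, Nat.card_congr (Equiv.Set.univPi S), Nat.card_pi]
    have step : ∀ m : Fin (n + 1), Nat.card (S m) = (S m).ncard := fun m =>
      Nat.card_coe_set_eq (S m)
    rw [Finset.prod_congr rfl fun m _ => step m]
    have hjc : j ≠ c := hcj.symm
    have hsub : ({j, c} : Finset (Fin (n + 1))) ⊆ Finset.univ := Finset.subset_univ _
    rw [← Finset.prod_sdiff hsub, Finset.prod_pair hjc, hSj, hSc]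
    simp only [Set.ncard_singleton, mul_one]
    have hcongr : ∀ m ∈ Finset.univ \ ({j, c} : Finset (Fin (n + 1))),
        (S m).ncard = k := by
      intro m hm
      simp only [Finset.mem_sdiff, Finset.mem_insert, Finset.mem_singleton, not_or] at hm
      exact hScard m hm.2.1 hm.2.2
    rw [Finset.prod_congr rfl hcongr, Finset.prod_const,
      Finset.card_sdiff_of_subset hsub, Finset.card_univ, Fintype.card_fin,
      Finset.card_pair hjc, show n + 1 - 2 = n - 1 from by omega]
  -- the projection map
  have hone : ((fun _ => 1 : Fin (n + 1) → ℂ)) ≠ 0 := by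
    intro h
    have := congrFun h 0
    simp at this
  set F : (Fin (n + 1) → ℂ) → Projectivization ℂ (Fin (n + 1) → ℂ) :=
    fun x => if h : x ≠ 0 then Projectivization.mk ℂ x h
      else Projectivization.mk ℂ (fun _ => 1) hone with hF
  have hTne : ∀ x ∈ T, x ≠ 0 := by
    intro x hx h0
    have hm := Set.mem_univ_pi.mp hx
    have := ((hiff x).mpr hm).2.2
    rw [h0] at this
    simp at this
  have himg : {p : Projectivization ℂ (Fin (n + 1) → ℂ) | P p.rep ∧ p.rep j = 0} = F '' T := by
    ext p
    simp only [Set.mem_setOf_eq, Set.mem_image]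
    constructor
    · rintro ⟨hPp, hpj⟩
      have hrep := p.rep_nonzero
      have hc : p.rep c ≠ 0 := by
        intro h0
        exact hrep (hzero _ hPp hpj h0)
      set x : Fin (n + 1) → ℂ := (p.rep c)⁻¹ • p.rep with hx
      have hx0 : x ≠ 0 := by
        intro h0
        have := congrFun h0 c
        simp only [hx, Pi.smul_apply, smul_eq_mul, Pi.zero_apply] at this
        rw [inv_mul_cancel₀ hc] at this
        exact one_ne_zero this
      refine ⟨x, ?_, ?_⟩
      · rw [hT, Set.mem_univ_pi]
        apply (hiff x).mp
        refine ⟨hP _ _ hPp, ?_, ?_⟩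
        · simp [hx, hpj]
        · simp [hx, inv_mul_cancel₀ hc]
      · rw [hF]
        simp only [dif_pos hx0]
        rw [← p.mk_rep, mk_eq_mk_iff]
        exact ⟨Units.mk0 (p.rep c)⁻¹ (inv_ne_zero hc), rfl⟩
    · rintro ⟨x, hxT, hFx⟩
      have hx0 : x ≠ 0 := hTne x hxT
      obtain ⟨hPx, hxj, hxc⟩ := (hiff x).mpr (Set.mem_univ_pi.mp hxT)
      rw [hF] at hFx
      simp only [dif_pos hx0] at hFx
      have hrep : Projectivization.mk ℂ p.rep p.rep_nonzero = Projectivization.mk ℂ x hx0 := by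
        rw [p.mk_rep, hFx]
      rw [mk_eq_mk_iff] at hrep
      obtain ⟨a, ha⟩ := hrep
      have ha' : (a : ℂ) • x = p.rep := ha
      constructor
      · rw [← ha']; exact hP _ _ hPx
      · rw [← ha']
        simp [hxj]
  have hinj : Set.InjOn F T := by
    intro x hx y hy hxy
    have hx0 : x ≠ 0 := hTne x hx
    have hy0 : y ≠ 0 := hTne y hy
    rw [hF] at hxy
    simp only [dif_pos hx0, dif_pos hy0] at hxy
    rw [mk_eq_mk_iff] at hxy
    obtain ⟨a, ha⟩ := hxy
    have ha' : (a : ℂ) • y = x := ha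
    have hxc := ((hiff x).mpr (Set.mem_univ_pi.mp hx)).2.2
    have hyc := ((hiff y).mpr (Set.mem_univ_pi.mp hy)).2.2
    have := congrFun ha' c
    simp only [Pi.smul_apply, smul_eq_mul, hyc, hxc, mul_one] at this
    rw [← ha', this, one_smul]
  rw [himg]
  exact ⟨hTfin.image F, by rw [Set.ncard_image_of_injOn hinj, hTcard]⟩


/-- for each `j`, the fixed point set of the automorphism `φ_j` of the
generalized Fermat curve `S` of type `(k,n)`, i.e. the set of points of `S` whose `j`-th
homogeneous coordinate vanishes, is finite of cardinality exactly `k^{n-1}`. -/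
theorem stmt_9 (k n : ℕ) (hk : 2 ≤ k) (hn : 2 ≤ n)
    (lam : ℕ → ℂ) (hlam0 : lam 0 = 1)
    (hlam_ne0 : ∀ i, 1 ≤ i → i ≤ n - 2 → lam i ≠ 0)
    (hlam_ne1 : ∀ i, 1 ≤ i → i ≤ n - 2 → lam i ≠ 1)
    (hlam_inj : ∀ i j, i ≤ n - 2 → j ≤ n - 2 → lam i = lam j → i = j) :
    ∀ j : Fin (n + 1),
      {p : Projectivization ℂ (Fin (n + 1) → ℂ) |
          fermatEqns n k lam p.rep ∧ p.rep j = 0}.Finite ∧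
      {p : Projectivization ℂ (Fin (n + 1) → ℂ) |
          fermatEqns n k lam p.rep ∧ p.rep j = 0}.ncard = k ^ (n - 1) := by
  intro j
  obtain ⟨c, S, hcj, hSj, hSc, hSa, hiff, hzero⟩ :=
    core k n hk hn lam hlam0 hlam_ne0 hlam_inj j
  exact fermat_main_aux k n hk hn (fermatEqns n k lam)
    (fun x t h => fermat_smul h t) j c S hcj hSj hSc hSa hiff hzero
    (fun a => rootsFin k (by omega) a) (fun a ha => rootsCard k (by omega) a ha)
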